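/- If a thrice-differentiable function f : ℝ^d → ℝ is M-quasi-self-concordant with respect to a norm ‖·‖ (i.e., |∇³f(x)[u,u,h]| ≤ M ‖h‖ · uᵀ∇²f(x)u for all u, h, x), then f is (r, exp(Mr))-Hessian stable with respect to ‖·‖: for all x, y with ‖x − y‖ ≤ r, exp(−Mr)·∇²f(y) ⪯ ∇²f(x) ⪯ exp(Mr)·∇²f(y). -/

import Mathlib

section Aux

variable {E : Type*} [NormedAddCommGroup E] [NormedSpace ℝ E]

private lemma auxA (f : E → ℝ) (z a b c : E) :
    iteratedFDeriv ℝ 3 f z ![a, b, c] = fderiv ℝ (fderiv ℝ (fderiv ℝ f)) z a b c := by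
  rw [iteratedFDeriv_succ_apply_right, iteratedFDeriv_two_apply]
  simp [Fin.init, Fin.last]

private lemma auxB (f : E → ℝ) (hf : ContDiff ℝ 3 f) (z a b : E) :
    fderiv ℝ (fderiv ℝ (fderiv ℝ f)) z a b = fderiv ℝ (fderiv ℝ (fderiv ℝ f)) z b a := by
  have h1 : ContDiffAt ℝ 2 (fderiv ℝ f) z :=
    (hf.fderiv_right (by norm_num)).contDiffAt
  exact (h1.isSymmSndFDerivAt (by norm_num)).eq a b

private lemma auxHasFDeriv (f : E → ℝ) (hf : ContDiff ℝ 3 f) (b c z : E) :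
    HasFDerivAt (fun w => fderiv ℝ (fderiv ℝ f) w b c)
      (((ContinuousLinearMap.apply ℝ ℝ c).comp
        (ContinuousLinearMap.apply ℝ (E →L[ℝ] ℝ) b)).comp
        (fderiv ℝ (fderiv ℝ (fderiv ℝ f)) z)) z := by
  have hg1 : ContDiff ℝ 2 (fderiv ℝ f) := hf.fderiv_right (by norm_num)
  have hg2 : ContDiff ℝ 1 (fderiv ℝ (fderiv ℝ f)) := hg1.fderiv_right (by norm_num)
  have h1 : HasFDerivAt (fderiv ℝ (fderiv ℝ f))
      (fderiv ℝ (fderiv ℝ (fderiv ℝ f)) z) z :=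
    (hg2.differentiable (by norm_num) z).hasFDerivAt
  exact (((ContinuousLinearMap.apply ℝ ℝ c).comp
        (ContinuousLinearMap.apply ℝ (E →L[ℝ] ℝ) b)).hasFDerivAt).comp z (hg2.differentiable (by norm_num) z).hasFDerivAt

private lemma auxC (f : E → ℝ) (hf : ContDiff ℝ 3 f) (z a b c : E) :
    fderiv ℝ (fderiv ℝ (fderiv ℝ f)) z a b c = fderiv ℝ (fderiv ℝ (fderiv ℝ f)) z a c b := by
  have hΦΨ : (fun w => fderiv ℝ (fderiv ℝ f) w b c)
      = (fun w => fderiv ℝ (fderiv ℝ f) w c b) := by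
    funext w
    have h2 : ContDiffAt ℝ 2 f w := hf.contDiffAt.of_le (by norm_num)
    exact (h2.isSymmSndFDerivAt (by norm_num)).eq b c
  have h1 := auxHasFDeriv f hf b c z
  have h2 := auxHasFDeriv f hf c b z
  rw [hΦΨ] at h1
  have h3 := h1.unique h2
  exact ContinuousLinearMap.ext_iff.mp h3 a

private lemma auxT3 (f : E → ℝ) (hf : ContDiff ℝ 3 f) (z v u : E) :
    fderiv ℝ (fderiv ℝ (fderiv ℝ f)) z v u u = iteratedFDeriv ℝ 3 f z ![u, u, v] := by
  rw [auxA]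
  rw [auxB f hf z v u, auxC f hf z u v u]

private lemma auxQderiv (f : E → ℝ) (hf : ContDiff ℝ 3 f) (u z : E) :
    HasFDerivAt (fun w => iteratedFDeriv ℝ 2 f w ![u, u])
      (((ContinuousLinearMap.apply ℝ ℝ u).comp
        (ContinuousLinearMap.apply ℝ (E →L[ℝ] ℝ) u)).comp
        (fderiv ℝ (fderiv ℝ (fderiv ℝ f)) z)) z := by
  have he : (fun w => iteratedFDeriv ℝ 2 f w ![u, u])
      = fun w => fderiv ℝ (fderiv ℝ f) w u u := by
    funext w
    rw [iteratedFDeriv_two_apply]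
    simp
  rw [he]
  exact auxHasFDeriv f hf u u z

private lemma oneside (f : E → ℝ) (hf : ContDiff ℝ 3 f) (M r : ℝ) (hM : 0 ≤ M) (hr : 0 ≤ r)
    (hqsc : ∀ x u h : E,
      |iteratedFDeriv ℝ 3 f x ![u, u, h]| ≤ M * ‖h‖ * iteratedFDeriv ℝ 2 f x ![u, u])
    (x y : E) (hxy : ‖x - y‖ ≤ r) (u : E) :
    iteratedFDeriv ℝ 2 f x ![u, u] ≤ Real.exp (M * r) * iteratedFDeriv ℝ 2 f y ![u, u] := by
  by_cases hE : ∃ h0 : E, h0 ≠ 0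
  · set v := x - y with hv
    set γ : ℝ → E := fun t => y + t • v with hγdef
    have hγ0 : γ 0 = y := by simp [hγdef]
    have hγ1 : γ 1 = x := by simp [hγdef, hv]
    set g : ℝ → ℝ := fun t => iteratedFDeriv ℝ 2 f (γ t) ![u, u] with hgdef
    have hγd : ∀ t : ℝ, HasDerivAt γ v t := by
      intro t
      have := ((hasDerivAt_id t).smul_const v).const_add y
      simp only [one_smul] at this
      exact this
    have hgd : ∀ t : ℝ, HasDerivAt g (iteratedFDeriv ℝ 3 f (γ t) ![u, u, v]) t := by
      intro t
      have h1 := (auxQderiv f hf u (γ t)).comp_hasDerivAt t (hγd t)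
      rw [← auxT3 f hf (γ t) v u]
      exact h1
    have e0 : g 0 = iteratedFDeriv ℝ 2 f y ![u, u] := by rw [hgdef]; simp only; rw [hγ0]
    have e1 : g 1 = iteratedFDeriv ℝ 2 f x ![u, u] := by rw [hgdef]; simp only; rw [hγ1]
    have bound : ∀ t : ℝ, |iteratedFDeriv ℝ 3 f (γ t) ![u, u, v]| ≤ M * r * |g t| := by
      intro t
      calc |iteratedFDeriv ℝ 3 f (γ t) ![u, u, v]|
          ≤ M * ‖v‖ * iteratedFDeriv ℝ 2 f (γ t) ![u, u] := hqsc (γ t) u v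
        _ ≤ M * ‖v‖ * |g t| := by
            apply mul_le_mul_of_nonneg_left (le_abs_self _)
            positivity
        _ ≤ M * r * |g t| := by
            apply mul_le_mul_of_nonneg_right _ (abs_nonneg _)
            exact mul_le_mul_of_nonneg_left hxy hM
    obtain ⟨h0, hh0⟩ := hE
    rcases hM.eq_or_lt with hM0 | hMpos
    · -- M = 0 : third derivative vanishes, g is constant
      have hzero : ∀ t : ℝ, iteratedFDeriv ℝ 3 f (γ t) ![u, u, v] = 0 := by
        intro t
        have h := hqsc (γ t) u v
        rw [← hM0] at h
        simp only [zero_mul] at h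
        exact abs_eq_zero.mp (le_antisymm h (abs_nonneg _))
      have hconst : g 1 = g 0 := by
        apply is_const_of_deriv_eq_zero (fun t => (hgd t).differentiableAt)
        intro t
        rw [(hgd t).deriv]
        exact hzero t
      rw [← hM0]
      simp only [zero_mul, Real.exp_zero, one_mul]
      rw [← e1, ← e0]
      exact hconst.le
    · -- M > 0 : quadratic form is nonnegative, use Gronwall
      have hQnn : ∀ z : E, 0 ≤ iteratedFDeriv ℝ 2 f z ![u, u] := by
        intro z
        have h := (abs_nonneg _).trans (hqsc z u h0)
        have hc : 0 < M * ‖h0‖ := mul_pos hMpos (norm_pos_iff.mpr hh0)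
        nlinarith
      have key := norm_le_gronwallBound_of_norm_deriv_right_le
        (f := g) (f' := fun t => iteratedFDeriv ℝ 3 f (γ t) ![u, u, v])
        (δ := ‖g 0‖) (K := M * r) (ε := 0) (a := 0) (b := 1)
        (fun t _ => (hgd t).continuousAt.continuousWithinAt)
        (fun t _ => (hgd t).hasDerivWithinAt)
        le_rfl
        (fun t _ => by simpa [Real.norm_eq_abs] using bound t)
        1 (by norm_num)
      rw [gronwallBound_ε0] at key
      have e0' : ‖g 0‖ = iteratedFDeriv ℝ 2 f y ![u, u] := by
        rw [Real.norm_eq_abs, e0, abs_of_nonneg (hQnn y)]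
      calc iteratedFDeriv ℝ 2 f x ![u, u] = g 1 := e1.symm
        _ ≤ ‖g 1‖ := le_abs_self _
        _ ≤ ‖g 0‖ * Real.exp (M * r * (1 - 0)) := key
        _ = Real.exp (M * r) * iteratedFDeriv ℝ 2 f y ![u, u] := by
            rw [e0']; ring_nf
  · -- E is trivial : u = 0 and both sides are 0
    push_neg at hE
    have hu : u = 0 := hE u
    have hx : iteratedFDeriv ℝ 2 f x ![u, u] = 0 := by
      rw [hu]
      exact (iteratedFDeriv ℝ 2 f x).map_coord_zero 0 (by simp)
    have hy : iteratedFDeriv ℝ 2 f y ![u, u] = 0 := by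
      rw [hu]
      exact (iteratedFDeriv ℝ 2 f y).map_coord_zero 0 (by simp)
    rw [hx, hy]
    simp

end Aux

/-- Quasi-self-concordance implies Hessian stability: if
`|∇³f(x)[u,u,h]| ≤ M ‖h‖ uᵀ∇²f(x)u` everywhere, then for `‖x - y‖ ≤ r` the Hessian
quadratic forms at `x` and `y` agree up to a factor `exp (M r)`. -/
theorem stmt3 {E : Type*} [NormedAddCommGroup E] [NormedSpace ℝ E]
    (f : E → ℝ) (hf : ContDiff ℝ 3 f) (M r : ℝ) (hM : 0 ≤ M) (hr : 0 ≤ r)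
    (hqsc : ∀ x u h : E,
      |iteratedFDeriv ℝ 3 f x ![u, u, h]| ≤ M * ‖h‖ * iteratedFDeriv ℝ 2 f x ![u, u]) :
    ∀ x y : E, ‖x - y‖ ≤ r → ∀ u : E,
      Real.exp (-(M * r)) * iteratedFDeriv ℝ 2 f y ![u, u] ≤ iteratedFDeriv ℝ 2 f x ![u, u] ∧
      iteratedFDeriv ℝ 2 f x ![u, u] ≤ Real.exp (M * r) * iteratedFDeriv ℝ 2 f y ![u, u] := by
  intro x y hxy u
  constructor
  · have h1 := oneside f hf M r hM hr hqsc y x (by rwa [norm_sub_rev]) u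
    have h2 := mul_le_mul_of_nonneg_left h1 (Real.exp_nonneg (-(M * r)))
    calc Real.exp (-(M * r)) * iteratedFDeriv ℝ 2 f y ![u, u]
        ≤ Real.exp (-(M * r)) * (Real.exp (M * r) * iteratedFDeriv ℝ 2 f x ![u, u]) := h2
      _ = iteratedFDeriv ℝ 2 f x ![u, u] := by
          rw [← mul_assoc, ← Real.exp_add]
          simp
  · exact oneside f hf M r hM hr hqsc x y hxy u
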